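/- For V = F_3[x,y] with the GL_2(F_3)-action induced from the standard representation, the cofixed space of the degree-4 homogeneous component V_4 is a 1-dimensional F_3-vector space, spanned by the image of x²y². -/
import Mathlib


open MvPolynomial

/-- The action of `g ∈ GL₂(F₃)` on `F₃[x,y]` by linear substitution of the variables. -/
noncomputable def glAction (g : GL (Fin 2) (ZMod 3)) :
    MvPolynomial (Fin 2) (ZMod 3) →ₐ[ZMod 3] MvPolynomial (Fin 2) (ZMod 3) :=
  aeval (fun i => ∑ j : Fin 2, C ((g : Matrix (Fin 2) (Fin 2) (ZMod 3)) i j) * X j)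

/-- The monomial `x²y²`, as an element of the degree-4 homogeneous component of `F₃[x,y]`. -/
noncomputable def x2y2 : (homogeneousSubmodule (Fin 2) (ZMod 3) 4) :=
  ⟨X 0 ^ 2 * X 1 ^ 2, by
    rw [mem_homogeneousSubmodule]
    simpa using ((isHomogeneous_X (ZMod 3) (0 : Fin 2)).pow 2).mul
      ((isHomogeneous_X (ZMod 3) (1 : Fin 2)).pow 2)⟩

namespace CofixedAux

abbrev P := MvPolynomial (Fin 2) (ZMod 3)
noncomputable abbrev V4 : Submodule (ZMod 3) P := homogeneousSubmodule (Fin 2) (ZMod 3) 4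

lemma h3 : (3 : P) = 0 := by simpa using CharP.cast_eq_zero P 3

/-! ### The invariant functional -/

noncomputable def Phi : P →ₗ[ZMod 3] ZMod 3 :=
  ∑ w : Fin 2 → ZMod 3, (aeval w : P →ₐ[ZMod 3] ZMod 3).toLinearMap

lemma Phi_apply (p : P) : Phi p = ∑ w : Fin 2 → ZMod 3, aeval w p := by
  simp [Phi]

lemma Phi_glAction (g : GL (Fin 2) (ZMod 3)) (p : P) : Phi (glAction g p) = Phi p := by
  simp only [Phi_apply, glAction]
  have key : ∀ w : Fin 2 → ZMod 3, aeval w (aeval (fun i => ∑ j : Fin 2, C ((g : Matrix (Fin 2) (Fin 2) (ZMod 3)) i j) * X j) p)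
      = aeval ((g : Matrix (Fin 2) (Fin 2) (ZMod 3)).mulVec w) p := by
    intro w
    rw [comp_aeval_apply]
    have : (fun i => aeval w (∑ j : Fin 2, C ((g : Matrix (Fin 2) (Fin 2) (ZMod 3)) i j) * X j))
        = (g : Matrix (Fin 2) (Fin 2) (ZMod 3)).mulVec w := by
      funext i; simp [Matrix.mulVec, dotProduct]
    rw [this]
  simp only [key]
  have e : Function.Bijective (fun w : Fin 2 → ZMod 3 => (g : Matrix (Fin 2) (Fin 2) (ZMod 3)).mulVec w) := by
    have h1 : Function.LeftInverse (fun w => ((g⁻¹ : GL (Fin 2) (ZMod 3)) : Matrix (Fin 2) (Fin 2) (ZMod 3)).mulVec w)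
        (fun w : Fin 2 → ZMod 3 => (g : Matrix (Fin 2) (Fin 2) (ZMod 3)).mulVec w) := by
      intro w
      show ((g⁻¹ : GL (Fin 2) (ZMod 3)) : Matrix (Fin 2) (Fin 2) (ZMod 3)).mulVec (((g : GL (Fin 2) (ZMod 3)) : Matrix (Fin 2) (Fin 2) (ZMod 3)).mulVec w) = w
      rw [Matrix.mulVec_mulVec, show ((g⁻¹ : GL (Fin 2) (ZMod 3)) : Matrix (Fin 2) (Fin 2) (ZMod 3)) * g = 1 from g.inv_mul, Matrix.one_mulVec]
    have h2 : Function.RightInverse (fun w => ((g⁻¹ : GL (Fin 2) (ZMod 3)) : Matrix (Fin 2) (Fin 2) (ZMod 3)).mulVec w)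
        (fun w : Fin 2 → ZMod 3 => (g : Matrix (Fin 2) (Fin 2) (ZMod 3)).mulVec w) := by
      intro w
      show ((g : GL (Fin 2) (ZMod 3)) : Matrix (Fin 2) (Fin 2) (ZMod 3)).mulVec (((g⁻¹ : GL (Fin 2) (ZMod 3)) : Matrix (Fin 2) (Fin 2) (ZMod 3)).mulVec w) = w
      rw [Matrix.mulVec_mulVec, show ((g : GL (Fin 2) (ZMod 3)) : Matrix (Fin 2) (Fin 2) (ZMod 3)) * ↑g⁻¹ = 1 from g.mul_inv, Matrix.one_mulVec]
    exact ⟨h1.injective, h2.surjective⟩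
  exact (Function.Bijective.sum_comp e fun w => aeval w p)

noncomputable def psi : V4 →ₗ[ZMod 3] ZMod 3 := Phi.comp V4.subtype

/-! ### Monomial basis -/

lemma degree_sum (u : P) (hu : u.IsHomogeneous 4) (m : Fin 2 →₀ ℕ) (h : coeff m u ≠ 0) :
    m 0 + m 1 = 4 := by
  have := hu h
  simpa [Finsupp.weight_apply, Finsupp.sum_fintype, Fin.sum_univ_two] using this

lemma fin2_finsupp (m : Fin 2 →₀ ℕ) : m = Finsupp.single 0 (m 0) + Finsupp.single 1 (m 1) := by
  ext j; fin_cases j <;> simp [Finsupp.single_apply]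

lemma decomp (u : P) (hu : u.IsHomogeneous 4) :
    u = ∑ i ∈ Finset.range 5,
      C (coeff (Finsupp.single 0 i + Finsupp.single 1 (4-i)) u) *
        monomial (Finsupp.single 0 i + Finsupp.single 1 (4-i)) (1 : ZMod 3) := by
  ext m
  rw [coeff_sum]
  simp only [coeff_C_mul, coeff_monomial, mul_ite, mul_one, mul_zero]
  by_cases hm : m 0 + m 1 = 4
  · have hmeq : m = Finsupp.single 0 (m 0) + Finsupp.single 1 (m 1) := fin2_finsupp m
    have key : ∀ i ∈ Finset.range 5,
        (if (Finsupp.single (0:Fin 2) i + Finsupp.single 1 (4-i)) = m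
          then coeff (Finsupp.single (0:Fin 2) i + Finsupp.single 1 (4-i)) u else 0)
        = (if i = m 0 then coeff m u else 0) := by
      intro i hi
      by_cases h : (Finsupp.single (0:Fin 2) i + Finsupp.single 1 (4-i)) = m
      · rw [if_pos h]
        have h0 := DFunLike.congr_fun h 0
        simp [Finsupp.single_apply] at h0
        rw [if_pos h0, h]
      · rw [if_neg h, if_neg]
        intro hc
        apply h
        rw [hmeq, ← hc]
        have : 4 - i = m 1 := by omega
        rw [this]
    rw [Finset.sum_congr rfl key, Finset.sum_ite_eq' (Finset.range 5) (m 0)]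
    rw [if_pos (by simp only [Finset.mem_range]; omega)]
  · have h1 : coeff m u = 0 := by
      by_contra h
      exact hm (degree_sum u hu m h)
    rw [h1]
    symm
    apply Finset.sum_eq_zero
    intro i hi
    rw [if_neg]
    intro h
    have h0 := DFunLike.congr_fun h 0
    have h1' := DFunLike.congr_fun h 1
    simp only [Finset.mem_range] at hi
    simp [Finsupp.single_apply] at h0 h1'
    omega

noncomputable def E (i : ℕ) : V4 :=
  ⟨monomial (Finsupp.single 0 (min i 4) + Finsupp.single 1 (4 - min i 4)) 1, by
    rw [mem_homogeneousSubmodule]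
    apply isHomogeneous_monomial
    have : min i 4 + (4 - min i 4) = 4 := by omega
    simp [Finsupp.degree_eq_weight_one, Finsupp.weight_apply, Finsupp.sum_fintype,
      Fin.sum_univ_two, Finsupp.single_apply, this]⟩

lemma E_val (i : ℕ) (hi : i ≤ 4) :
    ((E i : V4) : P) = X 0 ^ i * X 1 ^ (4 - i) := by
  simp only [E, min_eq_left hi]
  rw [X_pow_eq_monomial, X_pow_eq_monomial, monomial_mul, one_mul]

lemma E0_val : ((E 0 : V4) : P) = X 1 ^ 4 := by rw [E_val 0 (by norm_num)]; norm_num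
lemma E1_val : ((E 1 : V4) : P) = X 0 * X 1 ^ 3 := by rw [E_val 1 (by norm_num)]; norm_num
lemma E2_val : ((E 2 : V4) : P) = X 0 ^ 2 * X 1 ^ 2 := by rw [E_val 2 (by norm_num)]
lemma E3_val : ((E 3 : V4) : P) = X 0 ^ 3 * X 1 := by rw [E_val 3 (by norm_num)]; norm_num
lemma E4_val : ((E 4 : V4) : P) = X 0 ^ 4 := by rw [E_val 4 (by norm_num)]; norm_num

/-! ### GL elements -/

def gg1 : GL (Fin 2) (ZMod 3) := ⟨!![1,1;0,1], !![1,2;0,1], by decide, by decide⟩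
def gg2 : GL (Fin 2) (ZMod 3) := ⟨!![1,0;1,1], !![1,0;2,1], by decide, by decide⟩
def gg3 : GL (Fin 2) (ZMod 3) := ⟨!![0,1;1,0], !![0,1;1,0], by decide, by decide⟩

lemma gl1 : glAction gg1 (X 0 ^ 3 * X 1) = (X 0 + X 1)^3 * X 1 := by
  simp [glAction, gg1, Fin.sum_univ_two]
lemma gl2 : glAction gg1 (X 0 ^ 4) = (X 0 + X 1)^4 := by
  simp [glAction, gg1, Fin.sum_univ_two]
lemma gl3 : glAction gg2 (X 0 * X 1 ^ 3) = X 0 * (X 0 + X 1)^3 := by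
  simp [glAction, gg2, Fin.sum_univ_two]
lemma gl4 : glAction gg3 (X 0 ^ 3 * X 1) = X 1 ^ 3 * X 0 := by
  simp [glAction, gg3, Fin.sum_univ_two]

end CofixedAux

open CofixedAux in
/-- For `V = F₃[x,y]` with the `GL₂(F₃)`-action, the cofixed space of the
degree-4 homogeneous component `V₄` (the quotient of `V₄` by the span of all `v - g(v)`)
is a 1-dimensional `F₃`-vector space, spanned by the image of `x²y²`. -/
theorem cofixed_space_degree_four_GL2_F3
    (N : Submodule (ZMod 3) (homogeneousSubmodule (Fin 2) (ZMod 3) 4))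
    (hN : N = Submodule.span (ZMod 3)
        {x : (homogeneousSubmodule (Fin 2) (ZMod 3) 4) | ∃ (v : homogeneousSubmodule (Fin 2) (ZMod 3) 4) (g : GL (Fin 2) (ZMod 3)),
          (x : MvPolynomial (Fin 2) (ZMod 3)) = (v : MvPolynomial (Fin 2) (ZMod 3)) -
            glAction g (v : MvPolynomial (Fin 2) (ZMod 3))}) :
    Module.finrank (ZMod 3) ((homogeneousSubmodule (Fin 2) (ZMod 3) 4) ⧸ N) = 1 ∧
    Submodule.span (ZMod 3) {(Submodule.Quotient.mk x2y2 :
        (homogeneousSubmodule (Fin 2) (ZMod 3) 4) ⧸ N)} = ⊤ := by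
  -- N is contained in the kernel of psi
  have hNker : N ≤ LinearMap.ker psi := by
    rw [hN, Submodule.span_le]
    rintro x ⟨v, g, hx⟩
    simp only [SetLike.mem_coe, LinearMap.mem_ker, psi, LinearMap.comp_apply,
      Submodule.subtype_apply]
    rw [hx, map_sub, Phi_glAction, sub_self]
  -- psi x2y2 = 1
  have hpsi : psi x2y2 = 1 := by
    have : psi x2y2 = ∑ w : Fin 2 → ZMod 3, (w 0)^2 * (w 1)^2 := by
      simp [psi, x2y2, Phi_apply]
    rw [this]; decide
  -- x2y2 not in N
  have hnotin : x2y2 ∉ N := fun h => by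
    have := hNker h
    rw [LinearMap.mem_ker] at this
    rw [this] at hpsi
    exact one_ne_zero hpsi.symm
  -- membership of the basis monomials in N
  have hE4 : E 4 ∈ N := by
    have : (-(E 4)) ∈ N := by
      rw [hN]
      apply Submodule.subset_span
      refine ⟨E 1, gg2, ?_⟩
      rw [E1_val, gl3]
      push_cast
      rw [E4_val]
      linear_combination ((X 0^3*X 1) + X 0^2*X 1^2 : P) * h3
    simpa using neg_mem this
  have hE0 : E 0 ∈ N := by
    have : (-(E 0)) ∈ N := by
      rw [hN]
      apply Submodule.subset_span
      refine ⟨E 3, gg1, ?_⟩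
      rw [E3_val, gl1]
      push_cast
      rw [E0_val]
      linear_combination ((X 0^2*X 1^2) + X 0*X 1^3 : P) * h3
    simpa using neg_mem this
  have hsum : E 3 + E 1 + E 0 ∈ N := by
    have : (-(E 3 + E 1 + E 0)) ∈ N := by
      rw [hN]
      apply Submodule.subset_span
      refine ⟨E 4, gg1, ?_⟩
      rw [E4_val, gl2]
      push_cast
      rw [E3_val, E1_val, E0_val]
      linear_combination ((X 0^3*X 1) + 2*(X 0^2*X 1^2) + X 0*X 1^3 : P) * h3
    simpa using neg_mem this
  have hdiff : E 3 - E 1 ∈ N := by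
    rw [hN]
    apply Submodule.subset_span
    refine ⟨E 3, gg3, ?_⟩
    rw [E3_val, gl4]
    push_cast
    rw [E3_val, E1_val]
    ring
  have hE31 : E 3 + E 1 ∈ N := by
    have := N.sub_mem hsum hE0
    simpa using this
  have hE3 : E 3 ∈ N := by
    have h2 : E 3 + E 3 ∈ N := by
      have := N.add_mem hE31 hdiff
      have h' : E 3 + E 1 + (E 3 - E 1) = E 3 + E 3 := by abel
      rwa [h'] at this
    have := N.smul_mem (2 : ZMod 3) h2
    have heq : (2 : ZMod 3) • (E 3 + E 3) = E 3 := by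
      rw [← two_smul (ZMod 3), smul_smul, show ((2 : ZMod 3) * 2 = 1) from rfl, one_smul]
    rwa [heq] at this
  have hE1 : E 1 ∈ N := by
    have := N.sub_mem hE31 hE3
    have h' : E 3 + E 1 - E 3 = E 1 := by abel
    rwa [h'] at this
  -- x2y2 equals E 2
  have hx2y2E : x2y2 = E 2 := by
    apply Subtype.ext
    rw [E2_val]
    rfl
  -- all basis monomials lie in span{x2y2} ⊔ N
  have hEmem : ∀ i, i ≤ 4 → E i ∈ Submodule.span (ZMod 3) {x2y2} ⊔ N := by
    intro i hi
    interval_cases i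
    · exact Submodule.mem_sup_right hE0
    · exact Submodule.mem_sup_right hE1
    · exact Submodule.mem_sup_left (by rw [hx2y2E] at *; exact Submodule.mem_span_singleton_self _)
    · exact Submodule.mem_sup_right hE3
    · exact Submodule.mem_sup_right hE4
  -- spanning: span{x2y2} ⊔ N = ⊤
  have hsup : Submodule.span (ZMod 3) {x2y2} ⊔ N = ⊤ := by
    rw [eq_top_iff]
    rintro ⟨u, hu⟩ -
    rw [mem_homogeneousSubmodule] at hu
    have hdecomp : (⟨u, by rw [mem_homogeneousSubmodule]; exact hu⟩ : V4) =
        ∑ i ∈ Finset.range 5, coeff (Finsupp.single 0 i + Finsupp.single 1 (4-i)) u • E i := by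
      apply Subtype.ext
      push_cast
      conv_lhs => rw [decomp u hu]
      apply Finset.sum_congr rfl
      intro i hi
      simp only [Finset.mem_range] at hi
      rw [smul_eq_C_mul]
      congr 1
      rw [E_val i (by omega), X_pow_eq_monomial, X_pow_eq_monomial, monomial_mul, one_mul]
    rw [hdecomp]
    apply Submodule.sum_mem
    intro i hi
    simp only [Finset.mem_range] at hi
    exact Submodule.smul_mem _ _ (hEmem i (by omega))
  -- the quotient is spanned by the image of x2y2
  have hspan : Submodule.span (ZMod 3) {(Submodule.Quotient.mk x2y2 :
      V4 ⧸ N)} = ⊤ := by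
    have : Submodule.span (ZMod 3) {(Submodule.Quotient.mk x2y2 : V4 ⧸ N)} =
        Submodule.map N.mkQ (Submodule.span (ZMod 3) {x2y2}) := by
      rw [Submodule.map_span, Set.image_singleton]
      rfl
    rw [this, Submodule.map_mkQ_eq_top, sup_comm, hsup]
  refine ⟨?_, hspan⟩
  -- finrank = 1
  have hne : (Submodule.Quotient.mk x2y2 : V4 ⧸ N) ≠ 0 := by
    intro h
    exact hnotin ((Submodule.Quotient.mk_eq_zero N).mp h)
  exact (finrank_eq_one_iff_of_nonzero (Submodule.Quotient.mk x2y2 : V4 ⧸ N) hne).mpr hspan
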